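/- If a splitting t-(v, k×c, λ) design exists, then for every s with 0 ≤ s ≤ t, the divisibility condition λ·C(v−s, t−s) ≡ 0 mod c^{t−s}·C(k−s, t−s) holds. -/
import Mathlib


/-- A `k × c` block with entries in `X`: each point of `X` occurs at most once
in the array (i.e. the array of entries is injective). -/
def IsBlock {X : Type*} (k c : ℕ) (B : Fin k → Fin c → X) : Prop :=
  Function.Injective fun p : Fin k × Fin c => B p.1 p.2

/-- The points of `T` occur in pairwise distinct rows of the block `B`. -/
def OccursInDistinctRows {X : Type*} {k c : ℕ} (B : Fin k → Fin c → X)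
    (T : Finset X) : Prop :=
  ∃ f : X → Fin k, Set.InjOn f ↑T ∧ ∀ x ∈ T, ∃ j : Fin c, B (f x) j = x

/-- A splitting `t`-`(v, k × c, λ)` design on point set `X`, with blocks indexed by `ι`:
every `t`-subset of points occurs in `t` pairwise distinct rows of exactly `lam` blocks. -/
structure IsSplittingDesign {X ι : Type*} [Fintype X] [Fintype ι]
    (t v k c lam : ℕ) (B : ι → Fin k → Fin c → X) : Prop where
  card_points : Fintype.card X = v
  block : ∀ i, IsBlock k c (B i)
  balance : ∀ T : Finset X, T.card = t →
    Nat.card {i : ι // OccursInDistinctRows (B i) T} = lam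

/-- Existence of a splitting `t`-`(v, k × c, lam)` design. -/
def SplittingDesignExists (t v k c lam : ℕ) : Prop :=
  ∃ (ι : Type) (_ : Fintype ι) (B : ι → Fin k → Fin c → Fin v),
    IsSplittingDesign t v k c lam B


open Finset

namespace SplitAux

variable {v k c : ℕ}

/-- The cells of the block whose entry lies in `T`. -/
def cellsOf (b : Fin k → Fin c → Fin v) (T : Finset (Fin v)) : Finset (Fin k × Fin c) :=
  Finset.univ.filter (fun p => b p.1 p.2 ∈ T)

variable {b : Fin k → Fin c → Fin v} {T S : Finset (Fin v)}

lemma mem_cellsOf {p : Fin k × Fin c} : p ∈ cellsOf b T ↔ b p.1 p.2 ∈ T := by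
  simp [cellsOf]

lemma cellsOf_mono (h : S ⊆ T) : cellsOf b S ⊆ cellsOf b T := by
  intro p hp; rw [mem_cellsOf] at hp ⊢; exact h hp

lemma image_cellsOf_subset :
    (cellsOf b T).image (fun p => b p.1 p.2) ⊆ T := by
  intro x hx
  obtain ⟨p, hp, rfl⟩ := mem_image.1 hx
  exact mem_cellsOf.1 hp

lemma image_cellsOf_of_subset
    (himg : (cellsOf b T).image (fun p => b p.1 p.2) = T) (hST : S ⊆ T) :
    (cellsOf b S).image (fun p => b p.1 p.2) = S := by
  refine subset_antisymm image_cellsOf_subset ?_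
  intro x hx
  have hxT : x ∈ T := hST hx
  rw [← himg] at hxT
  obtain ⟨p, hp, rfl⟩ := mem_image.1 hxT
  exact mem_image.2 ⟨p, mem_cellsOf.2 hx, rfl⟩

lemma occurs_mono (hST : S ⊆ T) (h : OccursInDistinctRows b T) :
    OccursInDistinctRows b S := by
  obtain ⟨f, hfi, hfw⟩ := h
  exact ⟨f, hfi.mono (by exact_mod_cast hST), fun x hx => hfw x (hST hx)⟩

lemma occurs_iff (hb : IsBlock k c b) (hk : 0 < k) :
    OccursInDistinctRows b T ↔
      ((cellsOf b T).image (fun p => b p.1 p.2) = T ∧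
        Set.InjOn (Prod.fst : Fin k × Fin c → Fin k) ↑(cellsOf b T)) := by
  classical
  constructor
  · rintro ⟨f, hfi, hfw⟩
    have key : ∀ p : Fin k × Fin c, p ∈ cellsOf b T → f (b p.1 p.2) = p.1 := by
      intro p hp
      obtain ⟨j, hj⟩ := hfw _ (mem_cellsOf.1 hp)
      have : ((f (b p.1 p.2), j) : Fin k × Fin c) = p := hb hj
      exact congrArg Prod.fst this
    constructor
    · refine subset_antisymm image_cellsOf_subset ?_
      intro x hx
      obtain ⟨j, hj⟩ := hfw x hx
      exact mem_image.2 ⟨(f x, j), mem_cellsOf.2 (by simpa [hj] using hx), hj⟩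
    · intro p hp q hq hpq
      have hp' : p ∈ cellsOf b T := hp
      have hq' : q ∈ cellsOf b T := hq
      have hx : b p.1 p.2 ∈ T := mem_cellsOf.1 hp'
      have hy : b q.1 q.2 ∈ T := mem_cellsOf.1 hq'
      have h1 : f (b p.1 p.2) = f (b q.1 q.2) := by
        rw [key p hp', key q hq', hpq]
      have := hfi (by exact_mod_cast hx) (by exact_mod_cast hy) h1
      exact hb this
  · rintro ⟨himg, hinj⟩
    refine ⟨fun x => if h : ∃ p, p ∈ cellsOf b T ∧ b p.1 p.2 = x then h.choose.1
      else ⟨0, hk⟩, ?_, ?_⟩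
    · intro x hx y hy hxy
      have hx' : ∃ p, p ∈ cellsOf b T ∧ b p.1 p.2 = (x : Fin v) := by
        have : (x : Fin v) ∈ T := hx
        rw [← himg] at this
        obtain ⟨p, hp, hpx⟩ := mem_image.1 this
        exact ⟨p, hp, hpx⟩
      have hy' : ∃ p, p ∈ cellsOf b T ∧ b p.1 p.2 = (y : Fin v) := by
        have : (y : Fin v) ∈ T := hy
        rw [← himg] at this
        obtain ⟨p, hp, hpx⟩ := mem_image.1 this
        exact ⟨p, hp, hpx⟩
      simp only [dif_pos hx', dif_pos hy'] at hxy
      have := hinj (hx'.choose_spec.1) (hy'.choose_spec.1) hxy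
      rw [← hx'.choose_spec.2, ← hy'.choose_spec.2, this]
    · intro x hx
      have hx' : ∃ p, p ∈ cellsOf b T ∧ b p.1 p.2 = x := by
        rw [← himg] at hx
        obtain ⟨p, hp, hpx⟩ := mem_image.1 hx
        exact ⟨p, hp, hpx⟩
      refine ⟨hx'.choose.2, ?_⟩
      simp only [dif_pos hx']
      exact hx'.choose_spec.2

end SplitAux

namespace SplitAux

variable {v k c : ℕ} {b : Fin k → Fin c → Fin v} {S : Finset (Fin v)}

open scoped Classical in
lemma count_extensions (hb : IsBlock k c b) {s t : ℕ} (hk : 0 < k) (hst : s ≤ t)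
    (htk : t ≤ k) (hS : S.card = s) :
    ((Finset.univ.powersetCard t).filter
        (fun T => S ⊆ T ∧ OccursInDistinctRows b T)).card
      = if OccursInDistinctRows b S then
          Nat.choose (k - s) (t - s) * c ^ (t - s) else 0 := by
  classical
  by_cases hocc : OccursInDistinctRows b S
  · rw [if_pos hocc]
    obtain ⟨himgS, hinjS⟩ := (occurs_iff hb hk).1 hocc
    have hevalInj : Function.Injective (fun p : Fin k × Fin c => b p.1 p.2) := hb
    set R₀ : Finset (Fin k) := (cellsOf b S).image Prod.fst with hR₀def
    have hcellsS : (cellsOf b S).card = s := by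
      have h1 := Finset.card_image_of_injective (cellsOf b S) hevalInj
      rw [himgS, hS] at h1
      exact h1.symm
    have hR₀card : R₀.card = s := by
      rw [hR₀def, Finset.card_image_of_injOn hinjS, hcellsS]
    set 𝒟 := (Finset.univ.powersetCard (t - s)).filter
        (fun D : Finset (Fin k × Fin c) =>
          Set.InjOn (Prod.fst : Fin k × Fin c → Fin k) ↑D ∧ ∀ p ∈ D, p.1 ∉ R₀)
      with h𝒟
    -- Step A : bijection with cell sets
    have stepA : ((Finset.univ.powersetCard t).filter
        (fun T => S ⊆ T ∧ OccursInDistinctRows b T)).card = 𝒟.card := by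
      refine Finset.card_bij' (fun T _ => cellsOf b (T \ S))
        (fun D _ => S ∪ D.image (fun p => b p.1 p.2)) ?_ ?_ ?_ ?_
      · -- maps into 𝒟
        intro T hT
        simp only [mem_filter, Finset.mem_powersetCard] at hT
        obtain ⟨⟨-, hTcard⟩, hST, hoccT⟩ := hT
        obtain ⟨himgT, hinjT⟩ := (occurs_iff hb hk).1 hoccT
        have himgTS : (cellsOf b (T \ S)).image (fun p => b p.1 p.2) = T \ S :=
          image_cellsOf_of_subset himgT sdiff_subset
        have hcard : (cellsOf b (T \ S)).card = t - s := by
          have h1 := Finset.card_image_of_injective (cellsOf b (T \ S)) hevalInj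
          rw [himgTS, card_sdiff_of_subset hST, hS, hTcard] at h1
          exact h1.symm
        rw [h𝒟, mem_filter, Finset.mem_powersetCard]
        refine ⟨⟨subset_univ _, hcard⟩, ?_, ?_⟩
        · exact hinjT.mono (coe_subset.2 (cellsOf_mono sdiff_subset))
        · intro p hp hmem
          obtain ⟨q, hq, hq1⟩ := mem_image.1 hmem
          have hqT : q ∈ cellsOf b T := cellsOf_mono hST hq
          have hpT : p ∈ cellsOf b T := cellsOf_mono sdiff_subset hp
          have hqp : q = p := hinjT (mem_coe.2 hqT) (mem_coe.2 hpT) hq1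
          have h1 : b q.1 q.2 ∈ S := mem_cellsOf.1 hq
          have h2 : b p.1 p.2 ∈ T \ S := mem_cellsOf.1 hp
          rw [hqp] at h1
          exact (Finset.mem_sdiff.1 h2).2 h1
      · -- maps back
        intro D hD
        rw [h𝒟, mem_filter, Finset.mem_powersetCard] at hD
        obtain ⟨⟨-, hDcard⟩, hDinj, hDrow⟩ := hD
        have hdisj : Disjoint S (D.image (fun p => b p.1 p.2)) := by
          rw [Finset.disjoint_left]
          intro x hxS hxim
          obtain ⟨p, hpD, rfl⟩ := mem_image.1 hxim
          exact hDrow p hpD (mem_image_of_mem _ (mem_cellsOf.2 hxS))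
        have hcells : cellsOf b (S ∪ D.image (fun p => b p.1 p.2))
            = cellsOf b S ∪ D := by
          apply subset_antisymm
          · intro p hp
            rcases mem_union.1 (mem_cellsOf.1 hp) with h | h
            · exact mem_union_left _ (mem_cellsOf.2 h)
            · obtain ⟨q, hq, hqe⟩ := mem_image.1 h
              have : q = p := hevalInj hqe
              exact mem_union_right _ (this ▸ hq)
          · intro p hp
            rcases mem_union.1 hp with h | h
            · exact mem_cellsOf.2 (mem_union_left _ (mem_cellsOf.1 h))
            · exact mem_cellsOf.2 (mem_union_right _ (mem_image_of_mem _ h))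
        have himcard : (D.image (fun p => b p.1 p.2)).card = t - s := by
          rw [Finset.card_image_of_injective _ hevalInj, hDcard]
        rw [mem_filter, Finset.mem_powersetCard]
        refine ⟨⟨subset_univ _, ?_⟩, Finset.subset_union_left, ?_⟩
        · rw [Finset.card_union_of_disjoint hdisj, hS, himcard]
          omega
        · rw [occurs_iff hb hk, hcells]
          constructor
          · rw [Finset.image_union, himgS]
          · intro p hp q hq hpq
            rw [Finset.coe_union, Set.mem_union] at hp hq
            rcases hp with hp | hp <;> rcases hq with hq | hq
            · exact hinjS hp hq hpq
            · exact absurd (hpq ▸ mem_image_of_mem Prod.fst (mem_coe.1 hp))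
                (hDrow q (mem_coe.1 hq))
            · exact absurd (hpq ▸ mem_image_of_mem Prod.fst (mem_coe.1 hq))
                ((hpq ▸ hDrow p (mem_coe.1 hp)))
            · exact hDinj hp hq hpq
      · -- left inverse
        intro T hT
        show S ∪ (cellsOf b (T \ S)).image (fun p => b p.1 p.2) = T
        simp only [mem_filter, Finset.mem_powersetCard] at hT
        obtain ⟨⟨-, hTcard⟩, hST, hoccT⟩ := hT
        obtain ⟨himgT, hinjT⟩ := (occurs_iff hb hk).1 hoccT
        have himgTS : (cellsOf b (T \ S)).image (fun p => b p.1 p.2) = T \ S :=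
          image_cellsOf_of_subset himgT sdiff_subset
        rw [himgTS, Finset.union_sdiff_of_subset hST]
      · -- right inverse
        intro D hD
        show cellsOf b ((S ∪ D.image (fun p => b p.1 p.2)) \ S) = D
        rw [h𝒟, mem_filter, Finset.mem_powersetCard] at hD
        obtain ⟨⟨-, hDcard⟩, hDinj, hDrow⟩ := hD
        have hdisj : Disjoint S (D.image (fun p => b p.1 p.2)) := by
          rw [Finset.disjoint_left]
          intro x hxS hxim
          obtain ⟨p, hpD, rfl⟩ := mem_image.1 hxim
          exact hDrow p hpD (mem_image_of_mem _ (mem_cellsOf.2 hxS))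
        rw [Finset.union_sdiff_cancel_left hdisj]
        apply subset_antisymm
        · intro p hp
          obtain ⟨q, hq, hqe⟩ := mem_image.1 (mem_cellsOf.1 hp)
          exact (hevalInj hqe) ▸ hq
        · intro p hp
          exact mem_cellsOf.2 (mem_image_of_mem _ hp)
    -- Step B : counting the cell sets
    have stepB : 𝒟.card = Nat.choose (k - s) (t - s) * c ^ (t - s) := by
      have hmaps : ∀ D ∈ 𝒟, D.image Prod.fst ∈ R₀ᶜ.powersetCard (t - s) := by
        intro D hD
        rw [h𝒟, mem_filter, Finset.mem_powersetCard] at hD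
        obtain ⟨⟨-, hDcard⟩, hDinj, hDrow⟩ := hD
        rw [Finset.mem_powersetCard]
        constructor
        · intro a ha
          obtain ⟨p, hp, rfl⟩ := mem_image.1 ha
          exact Finset.mem_compl.2 (hDrow p hp)
        · rw [Finset.card_image_of_injOn hDinj, hDcard]
      rw [Finset.card_eq_sum_card_fiberwise hmaps]
      have fib : ∀ R ∈ R₀ᶜ.powersetCard (t - s),
          (𝒟.filter fun D => D.image Prod.fst = R).card = c ^ (t - s) := by
        intro R hR
        obtain ⟨hRsub, hRcard⟩ := Finset.mem_powersetCard.1 hR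
        have hbij := Finset.card_bij
          (s := R.pi fun _ => (univ : Finset (Fin c)))
          (t := 𝒟.filter fun D => D.image Prod.fst = R)
          (i := fun g _ => R.attach.image (fun a => (a.1, g a.1 a.2)))
          ?_ ?_ ?_
        · rw [← hbij, Finset.card_pi]
          simp only [card_univ, Fintype.card_fin]
          rw [Finset.prod_const, hRcard]
        · -- maps into the fiber
          intro g hg
          have hFinj : Set.InjOn (fun a : {x // x ∈ R} => (a.1, g a.1 a.2))
              ↑R.attach := by
            intro a _ a' _ hF
            have := congrArg Prod.fst hF
            exact Subtype.ext this
          have himfst : (R.attach.image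
              (fun a => (a.1, g a.1 a.2))).image Prod.fst = R := by
            rw [Finset.image_image]
            exact Finset.attach_image_val
          rw [mem_filter]
          refine ⟨?_, himfst⟩
          rw [h𝒟, mem_filter, Finset.mem_powersetCard]
          refine ⟨⟨subset_univ _, ?_⟩, ?_, ?_⟩
          · rw [Finset.card_image_of_injOn hFinj, Finset.card_attach, hRcard]
          · intro p hp q hq hpq
            obtain ⟨a, -, rfl⟩ := mem_image.1 (mem_coe.1 hp)
            obtain ⟨a', -, rfl⟩ := mem_image.1 (mem_coe.1 hq)
            have : a = a' := Subtype.ext hpq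
            rw [this]
          · intro p hp
            obtain ⟨a, -, rfl⟩ := mem_image.1 hp
            exact Finset.mem_compl.1 (hRsub a.2)
        · -- injective
          intro g hg g' hg' himg
          funext a ha
          have hmem : (a, g a ha) ∈ R.attach.image
              (fun a : {x // x ∈ R} => (a.1, g a.1 a.2)) :=
            mem_image.2 ⟨⟨a, ha⟩, mem_attach _ _, rfl⟩
          have himg' : R.attach.image (fun a : {x // x ∈ R} => (a.1, g a.1 a.2))
              = R.attach.image (fun a : {x // x ∈ R} => (a.1, g' a.1 a.2)) := himg
          rw [himg'] at hmem
          obtain ⟨a', -, hF⟩ := mem_image.1 hmem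
          obtain ⟨a1, ha1⟩ := a'
          rw [Prod.mk.injEq] at hF
          obtain ⟨h1, h2⟩ := hF
          subst h1
          exact h2.symm
        · -- surjective
          intro D hD
          rw [mem_filter] at hD
          obtain ⟨hD𝒟, hDR⟩ := hD
          rw [h𝒟, mem_filter, Finset.mem_powersetCard] at hD𝒟
          obtain ⟨⟨-, hDcard⟩, hDinj, hDrow⟩ := hD𝒟
          have hex : ∀ a ∈ R, ∃ p, p ∈ D ∧ p.1 = a := by
            intro a ha
            rw [← hDR] at ha
            obtain ⟨p, hp, h⟩ := mem_image.1 ha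
            exact ⟨p, hp, h⟩
          refine ⟨fun a ha => ((hex a ha).choose).2,
            Finset.mem_pi.2 (fun _ _ => mem_univ _), ?_⟩
          apply subset_antisymm
          · intro p hp
            obtain ⟨a, -, rfl⟩ := mem_image.1 hp
            show (a.1, (hex a.1 a.2).choose.2) ∈ D
            have hspec := (hex a.1 a.2).choose_spec
            have h1 : (a.1, (hex a.1 a.2).choose.2)
                = (hex a.1 a.2).choose := by
              rw [Prod.ext_iff]
              exact ⟨hspec.2.symm, rfl⟩
            rw [h1]
            exact hspec.1
          · intro p hp
            have haR : p.1 ∈ R := by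
              rw [← hDR]; exact mem_image_of_mem _ hp
            have hspec := (hex p.1 haR).choose_spec
            have hqp : (hex p.1 haR).choose = p :=
              hDinj (mem_coe.2 hspec.1) (mem_coe.2 hp) hspec.2
            refine mem_image.2 ⟨⟨p.1, haR⟩, mem_attach _ _, ?_⟩
            show (p.1, (hex p.1 haR).choose.2) = p
            rw [Prod.ext_iff]
            exact ⟨rfl, by rw [hqp]⟩
      rw [Finset.sum_congr rfl fib, Finset.sum_const, smul_eq_mul,
        Finset.card_powersetCard, Finset.card_compl, hR₀card, Fintype.card_fin]
    rw [stepA, stepB]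
  · rw [if_neg hocc, Finset.card_eq_zero, Finset.filter_eq_empty_iff]
    rintro T - ⟨hST, hoccT⟩
    exact hocc (occurs_mono hST hoccT)

end SplitAux


open Finset SplitAux in
theorem splitting_design_necessary_divisibility
    (t v k c lam : ℕ) (ht : 0 < t) (hv : 0 < v) (hc : 0 < c) (hlam : 0 < lam)
    (htk : t ≤ k) (hckv : c * k ≤ v)
    (h : SplittingDesignExists t v k c lam) :
    ∀ s ≤ t, c ^ (t - s) * Nat.choose (k - s) (t - s) ∣ lam * Nat.choose (v - s) (t - s) := by
  classical
  obtain ⟨ι, _inst, B, hd⟩ := h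
  intro s hst
  have hkpos : 0 < k := lt_of_lt_of_le ht htk
  have hkv : k ≤ v := le_trans (Nat.le_mul_of_pos_left k hc) hckv
  have hsv : s ≤ v := le_trans (le_trans hst htk) hkv
  obtain ⟨S, -, hS⟩ := Finset.exists_subset_card_eq
    (s := (univ : Finset (Fin v))) (n := s) (by simpa using hsv)
  set 𝒯 := (Finset.univ.powersetCard t).filter (fun T : Finset (Fin v) => S ⊆ T) with h𝒯
  have hTcard : 𝒯.card = Nat.choose (v - s) (t - s) := by
    have hcb : 𝒯.card = (Sᶜ.powersetCard (t - s)).card := by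
      refine Finset.card_bij' (fun T _ => T \ S) (fun U _ => S ∪ U) ?_ ?_ ?_ ?_
      · intro T hT
        rw [h𝒯, mem_filter, Finset.mem_powersetCard] at hT
        obtain ⟨⟨-, hTc⟩, hST⟩ := hT
        rw [Finset.mem_powersetCard]
        exact ⟨fun x hx => Finset.mem_compl.2 fun hxS => (Finset.mem_sdiff.1 hx).2 hxS,
          by rw [card_sdiff_of_subset hST, hTc, hS]⟩
      · intro U hU
        rw [Finset.mem_powersetCard] at hU
        obtain ⟨hUsub, hUcard⟩ := hU
        have hdisj : Disjoint S U := by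
          rw [Finset.disjoint_left]; intro x hxS hxU
          exact (Finset.mem_compl.1 (hUsub hxU)) hxS
        rw [h𝒯, mem_filter, Finset.mem_powersetCard]
        refine ⟨⟨subset_univ _, ?_⟩, Finset.subset_union_left⟩
        rw [Finset.card_union_of_disjoint hdisj, hS, hUcard]
        omega
      · intro T hT
        rw [h𝒯, mem_filter] at hT
        exact Finset.union_sdiff_of_subset hT.2
      · intro U hU
        rw [Finset.mem_powersetCard] at hU
        have hdisj : Disjoint S U := by
          rw [Finset.disjoint_left]; intro x hxS hxU
          exact (Finset.mem_compl.1 (hU.1 hxU)) hxS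
        exact Finset.union_sdiff_cancel_left hdisj
    rw [hcb, Finset.card_powersetCard, Finset.card_compl, Fintype.card_fin, hS]
  have count1 : ∑ T ∈ 𝒯, (Finset.univ.filter
        (fun i => OccursInDistinctRows (B i) T)).card
      = lam * Nat.choose (v - s) (t - s) := by
    have heach : ∀ T ∈ 𝒯, (Finset.univ.filter
        (fun i => OccursInDistinctRows (B i) T)).card = lam := by
      intro T hT
      rw [h𝒯, mem_filter, Finset.mem_powersetCard] at hT
      have hbal := hd.balance T hT.1.2
      rw [Nat.card_eq_fintype_card, Fintype.card_subtype] at hbal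
      exact hbal
    rw [Finset.sum_congr rfl heach, Finset.sum_const, smul_eq_mul, hTcard, mul_comm]
  have count2 : ∑ T ∈ 𝒯, (Finset.univ.filter
        (fun i => OccursInDistinctRows (B i) T)).card
      = (Finset.univ.filter (fun i => OccursInDistinctRows (B i) S)).card
          * (Nat.choose (k - s) (t - s) * c ^ (t - s)) := by
    have swap : ∑ T ∈ 𝒯, (Finset.univ.filter
          (fun i => OccursInDistinctRows (B i) T)).card
        = ∑ i : ι, (𝒯.filter (fun T => OccursInDistinctRows (B i) T)).card := by
      simp_rw [Finset.card_filter]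
      rw [Finset.sum_comm]
    rw [swap]
    have heach : ∀ i : ι, (𝒯.filter (fun T => OccursInDistinctRows (B i) T)).card
        = if OccursInDistinctRows (B i) S then
            Nat.choose (k - s) (t - s) * c ^ (t - s) else 0 := by
      intro i
      have h1 : 𝒯.filter (fun T => OccursInDistinctRows (B i) T)
          = (Finset.univ.powersetCard t).filter
              (fun T => S ⊆ T ∧ OccursInDistinctRows (B i) T) := by
        rw [h𝒯, Finset.filter_filter]
      rw [h1]
      exact SplitAux.count_extensions (hd.block i) hkpos hst htk hS
    rw [Finset.sum_congr rfl (fun i _ => heach i), Finset.sum_ite,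
      Finset.sum_const, Finset.sum_const_zero, add_zero, smul_eq_mul]
  refine ⟨(Finset.univ.filter (fun i => OccursInDistinctRows (B i) S)).card, ?_⟩
  rw [← count1, count2]
  ring
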